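/- Suppose q, p : ℝ → ℝ are differentiable functions satisfying the Hamiltonian system of P_II(α): q'(t) = p(t) − q(t)² − t/2 and p'(t) = 2q(t)p(t) + α, and suppose p(t) ≠ 0 for all t. Then the functions Q = q + α/p and P = p satisfy the Hamiltonian system of P_II(−α): Q' = P − Q² − t/2 and P' = 2QP − α. -/

import Mathlib

/-- The Bäcklund transformation `s(q,p) = (q + α/p, p)` maps solutions of the Hamiltonian
system of P_II(α) to solutions of the Hamiltonian system of P_II(−α). -/
theorem stmt2 (α : ℝ) (q p : ℝ → ℝ)
    (hq : Differentiable ℝ q) (hp : Differentiable ℝ p)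
    (hp0 : ∀ t, p t ≠ 0)
    (h1 : ∀ t, deriv q t = p t - q t ^ 2 - t / 2)
    (h2 : ∀ t, deriv p t = 2 * q t * p t + α) :
    (∀ t, deriv (fun s => q s + α / p s) t
        = p t - (q t + α / p t) ^ 2 - t / 2) ∧
    (∀ t, deriv p t = 2 * (q t + α / p t) * p t - α) := by
  constructor
  · intro t
    have hd : deriv (fun s => q s + α / p s) t
        = deriv q t + (0 * p t - α * deriv p t) / p t ^ 2 := by
      rw [deriv_fun_add (g := fun s => α / p s) (hq t)
        (((differentiable_const α).div hp hp0) t)]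
      congr 1
      rw [deriv_fun_div (differentiableAt_const α) (hp t) (hp0 t)]
      simp
    rw [hd, h1 t, h2 t]
    have := hp0 t
    field_simp
    ring
  · intro t
    rw [h2 t]
    have := hp0 t
    field_simp
    ring
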